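/- arXiv:1311.4096 — 6 statements merged into one kernel-verified Lean document; each statement's English description precedes it below -/
import Mathlib

section
/- Let k ≥ 1, e1 > e2 ≥ k be integers, M > 0, α ≥ M/k, and β1 > 0 satisfy ∑_{i=0}^{k-1} min(α, (e1−i)β1) = M and α ≥ (e1−k+1)β1. Define β2 = ((e1−k+1)/(e2−k+1))·β1. Then ∑_{i=0}^{k-1} min(α, (e1−i)β1, (e2−i)β2) = M. -/
/-- Scaling β1 by (e1−k+1)/(e2−k+1) preserves the min-cut sum at M. -/
theorem scaled_beta_feasible (k e1 e2 : ℕ) (M α β1 : ℝ)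
    (hk : 1 ≤ k) (hke2 : k ≤ e2) (he : e2 < e1) (hM : 0 < M)
    (hα : M / k ≤ α) (hβ1 : 0 < β1)
    (hsum : ∑ i ∈ Finset.range k, min α (((e1 : ℝ) - i) * β1) = M)
    (hαβ : ((e1 : ℝ) - k + 1) * β1 ≤ α) :
    ∑ i ∈ Finset.range k,
      min (min α (((e1 : ℝ) - i) * β1))
        (((e2 : ℝ) - i) * (((e1 : ℝ) - k + 1) / ((e2 : ℝ) - k + 1) * β1)) = M := by
  rw [← hsum]
  apply Finset.sum_congr rfl
  intro i hi
  rw [Finset.mem_range] at hi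
  apply min_eq_left
  refine le_trans (min_le_right _ _) ?_
  have hk2 : (k : ℝ) ≤ (e2 : ℝ) := by exact_mod_cast hke2
  have he12 : (e2 : ℝ) < (e1 : ℝ) := by exact_mod_cast he
  have hik : (i : ℝ) ≤ (k : ℝ) - 1 := by
    have : (i : ℝ) + 1 ≤ (k : ℝ) := by exact_mod_cast hi
    linarith
  have hpos : (0:ℝ) < (e2 : ℝ) - k + 1 := by linarith
  rw [mul_comm ((e2:ℝ) - i), mul_assoc, div_mul_eq_mul_div, le_div_iff₀ hpos]
  nlinarith [mul_nonneg (sub_nonneg.2 (le_of_lt he12)) (sub_nonneg.2 hik), hβ1.le,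
    mul_nonneg (mul_nonneg (sub_nonneg.2 (le_of_lt he12)) (sub_nonneg.2 hik)) hβ1.le]
end

section
/- Let k ≥ 1, e1 > e2 ≥ k be integers, M > 0, α ≥ M/k, β1 > 0 with ∑_{i=0}^{k-1} min(α, (e1−i)β1) = M and α ≥ (e1−k+1)β1. If β2 ≥ 0 satisfies ∑_{i=0}^{k-1} min(α, (e1−i)β1, (e2−i)β2) ≥ M, then β2 ≥ ((e1−k+1)/(e2−k+1))·β1. -/
/-- Converse: any feasible β2 must be at least the scaled value. -/
theorem scaled_beta_optimal (k e1 e2 : ℕ) (M α β1 β2 : ℝ)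
    (hk : 1 ≤ k) (hke2 : k ≤ e2) (he : e2 < e1) (hM : 0 < M)
    (hα : M / k ≤ α) (hβ1 : 0 < β1)
    (hsum : ∑ i ∈ Finset.range k, min α (((e1 : ℝ) - i) * β1) = M)
    (hαβ : ((e1 : ℝ) - k + 1) * β1 ≤ α)
    (hβ2 : 0 ≤ β2)
    (hfeas : M ≤ ∑ i ∈ Finset.range k,
      min (min α (((e1 : ℝ) - i) * β1)) (((e2 : ℝ) - i) * β2)) :
    ((e1 : ℝ) - k + 1) / ((e2 : ℝ) - k + 1) * β1 ≤ β2 := by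
  have hterm : ∀ i ∈ Finset.range k,
      min (min α (((e1 : ℝ) - i) * β1)) (((e2 : ℝ) - i) * β2)
        ≤ min α (((e1 : ℝ) - i) * β1) := fun i _ => min_le_left _ _
  have hle := Finset.sum_le_sum hterm
  rw [hsum] at hle
  have heq : ∑ i ∈ Finset.range k,
      min (min α (((e1 : ℝ) - i) * β1)) (((e2 : ℝ) - i) * β2)
      = ∑ i ∈ Finset.range k, min α (((e1 : ℝ) - i) * β1) := by
    rw [hsum]; linarith
  have hall := (Finset.sum_eq_sum_iff_of_le hterm).mp heq
  have hmem : k - 1 ∈ Finset.range k := Finset.mem_range.mpr (by omega)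
  have h := (hall (k - 1) hmem).symm
  have hcast : ((k - 1 : ℕ) : ℝ) = (k : ℝ) - 1 := by
    have : (1:ℕ) ≤ k := hk
    push_cast [this]; ring
  rw [hcast] at h
  have h1 : (e1 : ℝ) - ((k : ℝ) - 1) = (e1 : ℝ) - k + 1 := by ring
  have h2 : (e2 : ℝ) - ((k : ℝ) - 1) = (e2 : ℝ) - k + 1 := by ring
  rw [h1, h2] at h
  rw [min_eq_right hαβ] at h
  have hkey : ((e1 : ℝ) - k + 1) * β1 ≤ ((e2 : ℝ) - k + 1) * β2 := by
    calc ((e1 : ℝ) - k + 1) * β1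
        = min (((e1 : ℝ) - k + 1) * β1) (((e2 : ℝ) - k + 1) * β2) := h
      _ ≤ ((e2 : ℝ) - k + 1) * β2 := min_le_right _ _
  have hpos : (0:ℝ) < (e2 : ℝ) - k + 1 := by
    have : (k : ℝ) ≤ e2 := by exact_mod_cast hke2
    linarith
  rw [div_mul_eq_mul_div, div_le_iff₀ hpos]
  linarith [hkey]
end

section
/- Let k > 1, d ≥ k be integers, M > 0, and set α_o = M(d−k+2)/(k(d−k+2)−1). Let β* = β*(α) be the minimum β with ∑_{i=0}^{k-1} min(α, (d−i)β) ≥ M, for α in the range M/k ≤ α. Then for all α with M/k ≤ α ≤ α_o, we have α ≤ (d−k+2)·β*(α). -/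
/-- Below the threshold α_o, the optimal bandwidth satisfies α ≤ (d−k+2)β*(α). -/
theorem alpha_le_threshold_beta (k d : ℕ) (M α βs : ℝ)
    (hk : 1 < k) (hd : k ≤ d) (hM : 0 < M)
    (hα1 : M / k ≤ α)
    (hα2 : α ≤ M * ((d : ℝ) - k + 2) / (k * ((d : ℝ) - k + 2) - 1))
    (hleast : IsLeast {β : ℝ | 0 ≤ β ∧
      M ≤ ∑ i ∈ Finset.range k, min α (((d : ℝ) - i) * β)} βs) :
    α ≤ ((d : ℝ) - k + 2) * βs := by
  obtain ⟨⟨hβ0, hcon⟩, -⟩ := hleast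
  have hk2 : (2:ℝ) ≤ (k:ℝ) := by exact_mod_cast hk
  have hdk : (k:ℝ) ≤ (d:ℝ) := by exact_mod_cast hd
  set e : ℝ := (d:ℝ) - k + 2 with he
  have he2 : 2 ≤ e := by simp only [he]; linarith
  have hD : 0 < (k:ℝ) * e - 1 := by nlinarith
  by_contra h
  push_neg at h
  -- h : e * βs < α
  have hk1 : k - 1 + 1 = k := by omega
  have hsum : ∑ i ∈ Finset.range k, min α (((d : ℝ) - i) * βs)
      ≤ ((k:ℝ) - 1) * α + ((d:ℝ) - ((k:ℝ) - 1)) * βs := by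
    have hsplit : ∑ i ∈ Finset.range k, min α (((d : ℝ) - i) * βs)
        = (∑ i ∈ Finset.range (k-1), min α (((d : ℝ) - i) * βs))
          + min α (((d : ℝ) - (k-1 : ℕ)) * βs) := by
      have := Finset.sum_range_succ (fun i => min α (((d : ℝ) - i) * βs)) (k-1)
      rw [hk1] at this
      exact this
    rw [hsplit]
    have h1 : ∑ i ∈ Finset.range (k-1), min α (((d : ℝ) - i) * βs)
        ≤ ((k:ℝ) - 1) * α := by
      have := Finset.sum_le_card_nsmul (Finset.range (k-1))
        (fun i => min α (((d : ℝ) - i) * βs)) α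
        (fun i _ => min_le_left _ _)
      simp only [Finset.card_range, nsmul_eq_mul] at this
      have hc : ((k-1 : ℕ) : ℝ) = (k:ℝ) - 1 := by
        have : (1:ℕ) ≤ k := by omega
        push_cast [Nat.cast_sub this]; ring
      linarith [this, hc ▸ this]
    have h2 : min α (((d : ℝ) - (k-1 : ℕ)) * βs) ≤ ((d:ℝ) - ((k:ℝ) - 1)) * βs := by
      have hc : ((k-1 : ℕ) : ℝ) = (k:ℝ) - 1 := by
        have : (1:ℕ) ≤ k := by omega
        push_cast [Nat.cast_sub this]; ring
      rw [hc]
      exact min_le_right _ _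
    linarith
  have hMle : M ≤ ((k:ℝ) - 1) * α + ((d:ℝ) - ((k:ℝ) - 1)) * βs := le_trans hcon hsum
  have hα2' : α * ((k:ℝ) * e - 1) ≤ M * e := by
    rw [he]
    calc α * ((k:ℝ) * e - 1) ≤ (M * e / ((k:ℝ) * e - 1)) * ((k:ℝ) * e - 1) := by
          apply mul_le_mul_of_nonneg_right _ (le_of_lt hD)
          simpa [he] using hα2
      _ = M * e := div_mul_cancel₀ _ (ne_of_gt hD)
  -- derive contradiction
  have hd1 : (d:ℝ) - ((k:ℝ) - 1) = e - 1 := by simp only [he]; ring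
  rw [hd1] at hMle
  nlinarith [mul_le_mul_of_nonneg_left hMle (by linarith : (0:ℝ) ≤ e),
    mul_lt_mul_of_pos_left h (by linarith : (0:ℝ) < e - 1)]
end

section
/- For k > 1, d ≥ k, M > 0, and α = α_o := M(d−k+2)/(k(d−k+2)−1), the value β = α_o/(d−k+2) satisfies ∑_{i=0}^{k-1} min(α_o, (d−i)β) = M; that is, at the threshold storage size, β*(α_o) = α_o/(d−k+2). -/
/-- At the threshold storage α_o, β = α_o/(d−k+2) makes the min-cut sum exactly M. -/
theorem beta_at_threshold (k d : ℕ) (M : ℝ)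
    (hk : 1 < k) (hd : k ≤ d) (hM : 0 < M) :
    ∑ i ∈ Finset.range k,
      min (M * ((d : ℝ) - k + 2) / (k * ((d : ℝ) - k + 2) - 1))
        (((d : ℝ) - i) *
          (M * ((d : ℝ) - k + 2) / (k * ((d : ℝ) - k + 2) - 1) / ((d : ℝ) - k + 2))) = M := by
  have hkd : (k : ℝ) ≤ (d : ℝ) := by exact_mod_cast hd
  have hk2 : (2 : ℝ) ≤ (k : ℝ) := by exact_mod_cast hk
  obtain ⟨D, hD⟩ : ∃ D : ℝ, D = (d : ℝ) - k + 2 := ⟨_, rfl⟩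
  have hD2 : (2 : ℝ) ≤ D := by rw [hD]; linarith
  have hDpos : 0 < D := by linarith
  have hDne : D ≠ 0 := ne_of_gt hDpos
  have hden : 0 < (k : ℝ) * D - 1 := by nlinarith
  obtain ⟨α, hα⟩ : ∃ α : ℝ, α = M * D / ((k : ℝ) * D - 1) := ⟨_, rfl⟩
  have hαpos : 0 < α := by rw [hα]; positivity
  rw [← hD, ← hα]
  obtain ⟨m, rfl⟩ : ∃ m, k = m + 1 := ⟨k - 1, (Nat.succ_pred_eq_of_pos (by omega)).symm⟩
  rw [Finset.sum_range_succ]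
  have h1 : ∀ i ∈ Finset.range m, min α (((d : ℝ) - i) * (α / D)) = α := by
    intro i hi
    simp only [Finset.mem_range] at hi
    have hiD : D ≤ (d : ℝ) - i := by
      have : (i : ℝ) + 1 ≤ (m : ℝ) := by exact_mod_cast hi
      rw [hD]; push_cast; linarith
    have : α ≤ ((d : ℝ) - i) * (α / D) := by
      rw [mul_div_assoc', le_div_iff₀ hDpos]
      nlinarith
    exact min_eq_left this
  rw [Finset.sum_congr rfl h1, Finset.sum_const, Finset.card_range]
  have hdm : (d : ℝ) - (m : ℝ) = D - 1 := by rw [hD]; push_cast; ring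
  rw [hdm]
  have hmin : min α ((D - 1) * (α / D)) = (D - 1) * (α / D) := by
    apply min_eq_right
    rw [mul_div_assoc', div_le_iff₀ hDpos]
    nlinarith
  rw [hmin]
  have key : (((m : ℝ) + 1) * D - 1) * α = M * D := by
    have hdne : ((m : ℝ) + 1) * D - 1 ≠ 0 := by
      push_cast at hden; linarith
    rw [hα]; push_cast; field_simp
  obtain ⟨β, hβ⟩ : ∃ β : ℝ, β = α / D := ⟨_, rfl⟩
  have hαβ : α = β * D := by rw [hβ]; field_simp
  rw [← hβ, hαβ]
  rw [hαβ] at key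
  have key2 : (((m : ℝ) + 1) * D - 1) * β = M := by
    apply mul_right_cancel₀ hDne
    linear_combination key
  linear_combination key2
end

section
/- Let M be an l×l real tridiagonal matrix with diagonal entries M_{r,r} = c_r·λ + b_r·μ (1 ≤ r ≤ l), superdiagonal entries M_{r,r+1} = −b_{r+1}·μ, and subdiagonal entries M_{r+1,r} = −c_r·λ, for real parameters λ, μ and sequences b_1,…,b_l and c_1,…,c_l. Then det(M) = ∑_{i=0}^{l} (b_1 b_2 ⋯ b_{l−i})·(c_{l−i+1} ⋯ c_l)·μ^{l−i}·λ^i, where empty products are 1. -/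
open Finset

private def ent (lam mu : ℝ) (b c : ℕ → ℝ) (x y : ℕ) : ℝ :=
  if x = y then c (x + 1) * lam + b (x + 1) * mu
  else if y = x + 1 then -(b (y + 1) * mu)
  else if x = y + 1 then -(c (y + 1) * lam)
  else 0

private lemma ent_shift (lam mu : ℝ) (b c : ℕ → ℝ) (x y : ℕ) :
    ent lam mu b c (x+1) (y+1) = ent lam mu (fun r => b (r+1)) (fun r => c (r+1)) x y := by
  simp only [ent, add_left_inj]

private def Ssum (lam mu : ℝ) (b c : ℕ → ℝ) (l : ℕ) : ℝ :=
  ∑ i ∈ range (l + 1),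
      (∏ r ∈ Icc 1 (l - i), b r) * (∏ r ∈ Icc (l - i + 1) l, c r) * mu ^ (l - i) * lam ^ i

private lemma prod_Icc_shift (f : ℕ → ℝ) (a b : ℕ) :
    ∏ r ∈ Icc (a+1) (b+1), f r = ∏ r ∈ Icc a b, f (r+1) := by
  rw [← Finset.map_add_right_Icc, Finset.prod_map]; rfl

private lemma prod_Icc_bot (f : ℕ → ℝ) (n : ℕ) :
    ∏ r ∈ Icc 1 (n+1), f r = f 1 * ∏ r ∈ Icc 2 (n+1), f r := by
  have h : Icc 1 (n+1) = insert 1 (Icc 2 (n+1)) := by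
    ext x; simp only [Finset.mem_Icc, Finset.mem_insert]; omega
  rw [h, Finset.prod_insert (by simp)]

private lemma Srec (lam mu : ℝ) (b c : ℕ → ℝ) (l : ℕ) :
    Ssum lam mu b c (l+1) =
      b 1 * mu * Ssum lam mu (fun r => b (r+1)) (fun r => c (r+1)) l
        + lam ^ (l+1) * ∏ r ∈ Icc 1 (l+1), c r := by
  unfold Ssum
  rw [Finset.sum_range_succ]
  have htail : (∏ r ∈ Icc 1 (l+1-(l+1)), b r) * (∏ r ∈ Icc (l+1-(l+1)+1) (l+1), c r)
      * mu ^ (l+1-(l+1)) * lam ^ (l+1) = lam ^ (l+1) * ∏ r ∈ Icc 1 (l+1), c r := by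
    simp; ring
  rw [htail]
  congr 1
  rw [Finset.mul_sum]
  apply Finset.sum_congr rfl
  intro i hi
  have hil : i ≤ l := Nat.lt_succ_iff.mp (mem_range.mp hi)
  have h1 : l + 1 - i = (l - i) + 1 := by omega
  rw [h1, prod_Icc_bot b (l - i)]
  have hb2 : ∏ r ∈ Icc 2 (l-i+1), b r = ∏ r ∈ Icc 1 (l-i), b (r+1) := prod_Icc_shift b 1 (l-i)
  have hc2 : ∏ r ∈ Icc (l-i+1+1) (l+1), c r = ∏ r ∈ Icc (l-i+1) l, c (r+1) :=
    prod_Icc_shift c (l-i+1) l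
  rw [hb2, hc2]
  ring

private lemma det_tri (lam mu : ℝ) : ∀ l (b c : ℕ → ℝ),
    (Matrix.of fun i j : Fin l => ent lam mu b c i j).det = Ssum lam mu b c l := by
  intro l
  induction l using Nat.strong_induction_on with
  | _ l ih =>
    match l with
    | 0 => intro b c; simp [Ssum, Matrix.det_fin_zero]
    | 1 =>
      intro b c
      rw [Matrix.det_fin_one]
      simp [Ssum, ent, Finset.sum_range_succ]
      ring
    | (l+2) =>
      intro b c
      set b' : ℕ → ℝ := fun r => b (r+1) with hb'
      set c' : ℕ → ℝ := fun r => c (r+1) with hc'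
      set b'' : ℕ → ℝ := fun r => b (r+2) with hb''
      set c'' : ℕ → ℝ := fun r => c (r+2) with hc''
      set A : Matrix (Fin (l+2)) (Fin (l+2)) ℝ :=
        Matrix.of fun i j : Fin (l+2) => ent lam mu b c i j with hA
      rw [Matrix.det_succ_column_zero, Fin.sum_univ_succ, Fin.sum_univ_succ]
      have hz : ∑ i : Fin l, (-1 : ℝ) ^ ((i.succ.succ : Fin (l+2)) : ℕ)
          * A i.succ.succ 0 * (A.submatrix (i.succ.succ).succAbove Fin.succ).det = 0 := by
        apply Finset.sum_eq_zero
        intro i _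
        have : A i.succ.succ 0 = 0 := by
          show ent lam mu b c ((i:ℕ)+1+1) 0 = 0
          simp [ent]
        rw [this]; ring
      rw [hz, add_zero,
        show (Fin.succ (0:Fin (l+1))) = (1:Fin (l+2)) from rfl]
      -- first minor
      have hm1 : (A.submatrix (Fin.succAbove 0) Fin.succ).det = Ssum lam mu b' c' (l+1) := by
        have : A.submatrix (Fin.succAbove 0) Fin.succ
            = Matrix.of fun i j : Fin (l+1) => ent lam mu b' c' i j := by
          ext i j
          show ent lam mu b c ((0:Fin (l+2)).succAbove i : ℕ) ((j:ℕ)+1) = ent lam mu b' c' i j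
          rw [Fin.succAbove_zero]
          show ent lam mu b c ((i:ℕ)+1) ((j:ℕ)+1) = ent lam mu b' c' i j
          exact ent_shift lam mu b c i j
        rw [this]
        exact ih (l+1) (by omega) b' c'
      -- second minor
      set B : Matrix (Fin (l+1)) (Fin (l+1)) ℝ := A.submatrix (Fin.succAbove 1) Fin.succ with hB
      have hrow0 : ∀ j : Fin (l+1), B 0 j = ent lam mu b c 0 ((j:ℕ)+1) := by
        intro j
        show ent lam mu b c ((1:Fin (l+2)).succAbove 0 : ℕ) ((j:ℕ)+1) = _
        have h0 : (1:Fin (l+2)).succAbove 0 = 0 :=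
          Fin.succAbove_of_castSucc_lt _ _ (by simp [Fin.lt_def])
        rw [h0]; norm_num
      have hm2 : B.det = -(b 2 * mu) * Ssum lam mu b'' c'' l := by
        rw [Matrix.det_succ_row_zero, Fin.sum_univ_succ]
        have hz2 : ∑ j : Fin l, (-1 : ℝ) ^ ((j.succ : Fin (l+1)) : ℕ)
            * B 0 j.succ * (B.submatrix Fin.succ j.succ.succAbove).det = 0 := by
          apply Finset.sum_eq_zero
          intro j _
          have : B 0 j.succ = 0 := by
            rw [hrow0]
            show ent lam mu b c 0 ((j:ℕ)+1+1) = 0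
            simp [ent]
          simp [this]
        rw [hz2, add_zero]
        have hB00 : B 0 0 = -(b 2 * mu) := by
          rw [hrow0]
          show ent lam mu b c 0 1 = _
          simp [ent]
        have hC : B.submatrix Fin.succ ((0 : Fin (l+1)).succAbove)
            = Matrix.of fun i j : Fin l => ent lam mu b'' c'' i j := by
          ext i j
          rw [Fin.succAbove_zero]
          show A ((1:Fin (l+2)).succAbove i.succ) j.succ.succ = _
          have hs : (1:Fin (l+2)).succAbove i.succ = i.succ.succ :=
            Fin.succAbove_of_le_castSucc _ _ (by simp [Fin.le_def])
          rw [hs]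
          show ent lam mu b c ((i:ℕ)+1+1) ((j:ℕ)+1+1) = ent lam mu b'' c'' i j
          rw [ent_shift, ent_shift]
        rw [hB00, hC, ih l (by omega) b'' c'']
        simp
      rw [hm1, hm2]
      have hA00 : A 0 0 = c 1 * lam + b 1 * mu := by
        show ent lam mu b c 0 0 = _
        simp [ent]
      have hA10 : A 1 0 = -(c 1 * lam) := by
        show ent lam mu b c ((1 : Fin (l+2)) : ℕ) 0 = _
        rw [Fin.val_one]
        simp [ent]
      rw [hA00, hA10]
      simp only [Fin.val_zero, Fin.val_one, pow_zero, pow_one]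
      -- algebra
      rw [Srec lam mu b c (l+1), Srec lam mu b' c' l]
      have hcc : ∏ r ∈ Icc 1 (l+1), c' r = ∏ r ∈ Icc 2 (l+2), c r := by
        rw [hc', ← prod_Icc_shift c 1 (l+1)]
      have hcfull : ∏ r ∈ Icc 1 (l+2), c r = c 1 * ∏ r ∈ Icc 2 (l+2), c r :=
        prod_Icc_bot c (l+1)
      have hb1 : b' 1 = b 2 := rfl
      have hss : Ssum lam mu (fun r => b' (r+1)) (fun r => c' (r+1)) l = Ssum lam mu b'' c'' l := rfl
      rw [hcc, hcfull, hb1, hss]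
      ring



open Finset in
/-- Determinant of the tridiagonal matrix from the MTTDL computation
(b, c are 1-indexed: entry (r,r) = c r * λ + b r * μ, etc.). -/
theorem tridiagonal_det (l : ℕ) (lam mu : ℝ) (b c : ℕ → ℝ) :
    Matrix.det (Matrix.of (fun i j : Fin l =>
      if (i : ℕ) = (j : ℕ) then c (i + 1) * lam + b (i + 1) * mu
      else if (j : ℕ) = (i : ℕ) + 1 then -(b ((j : ℕ) + 1) * mu)
      else if (i : ℕ) = (j : ℕ) + 1 then -(c ((j : ℕ) + 1) * lam)
      else 0)) =
    ∑ i ∈ range (l + 1),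
      (∏ r ∈ Icc 1 (l - i), b r) * (∏ r ∈ Icc (l - i + 1) l, c r) * mu ^ (l - i) * lam ^ i := by
  exact det_tri lam mu l b c
end

section
/- Let k > 1, d2 ≥ k, d1 > d2, M > 0, and α satisfy M/k ≤ α ≤ M(d1−k+2)/(k(d1−k+2)−1). Let β1 = β*_{d1}(α) be the minimum β with ∑_{i=0}^{k-1} min(α,(d1−i)β) ≥ M. Then β2 := ((d1−k+1)/(d2−k+1))·β1 satisfies ∑_{i=0}^{k-1} min(α, (d2−i)β2) = M; that is, β*_{d2}(α) = ((d1−k+1)/(d2−k+1))·β*_{d1}(α) in this regime, and simultaneous optimality holds for both d1 and d2. -/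
private lemma sum_min_eval (m d : ℕ) (α β : ℝ)
    (hlo : ((d : ℝ) - m) * β ≤ α)
    (hhi : ∀ i < m, α ≤ ((d : ℝ) - i) * β) :
    ∑ i ∈ Finset.range (m + 1), min α (((d : ℝ) - i) * β)
      = m * α + ((d : ℝ) - m) * β := by
  rw [Finset.sum_range_succ, min_eq_right hlo,
    Finset.sum_congr rfl (fun i hi => min_eq_left (hhi i (Finset.mem_range.mp hi))),
    Finset.sum_const, Finset.card_range, nsmul_eq_mul]

private lemma sum_min_ub (m d : ℕ) (α β : ℝ) :
    ∑ i ∈ Finset.range (m + 1), min α (((d : ℝ) - i) * β)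
      ≤ m * α + ((d : ℝ) - m) * β := by
  rw [Finset.sum_range_succ]
  refine add_le_add ?_ (min_le_right _ _)
  calc ∑ i ∈ Finset.range m, min α (((d : ℝ) - i) * β)
      ≤ ∑ _i ∈ Finset.range m, α :=
        Finset.sum_le_sum fun i _ => min_le_left _ _
    _ = m * α := by rw [Finset.sum_const, Finset.card_range, nsmul_eq_mul]

set_option maxHeartbeats 800000 in
/-- Theorem 2 ('no loss' direction): below the threshold α_o, the scaled bandwidth
β2 = ((d1−k+1)/(d2−k+1))β*₍d1₎(α) is exactly optimal for d2. -/
theorem no_loss_below_threshold (k d1 d2 : ℕ) (M α β1 : ℝ)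
    (hk : 1 < k) (hkd2 : k ≤ d2) (hd : d2 < d1) (hM : 0 < M)
    (hα1 : M / k ≤ α)
    (hα2 : α ≤ M * ((d1 : ℝ) - k + 2) / (k * ((d1 : ℝ) - k + 2) - 1))
    (hleast : IsLeast {β : ℝ | 0 ≤ β ∧
      M ≤ ∑ i ∈ Finset.range k, min α (((d1 : ℝ) - i) * β)} β1) :
    ∑ i ∈ Finset.range k,
      min α (((d2 : ℝ) - i) * (((d1 : ℝ) - k + 1) / ((d2 : ℝ) - k + 1) * β1)) = M := by
  obtain ⟨⟨hβ1nn, hβ1sum⟩, hlb⟩ := hleast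
  obtain ⟨m, rfl⟩ : ∃ m, k = m + 1 := ⟨k - 1, by omega⟩
  have hm1 : 1 ≤ m := by omega
  have hmr : (1 : ℝ) ≤ (m : ℝ) := by exact_mod_cast hm1
  have hD2 : (m : ℝ) + 1 ≤ (d2 : ℝ) := by exact_mod_cast hkd2
  have hD1 : (d2 : ℝ) + 1 ≤ (d1 : ℝ) := by exact_mod_cast hd
  have hA : (0 : ℝ) < (d1 : ℝ) - m := by linarith
  have hB : (0 : ℝ) < (d2 : ℝ) - m := by linarith
  push_cast at hα1 hα2 hβ1sum ⊢
  -- positivity of α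
  have hαpos : 0 < α :=
    lt_of_lt_of_le (div_pos hM (by linarith)) hα1
  have hkα : M ≤ α * ((m : ℝ) + 1) := (div_le_iff₀ (by linarith)).mp hα1
  -- rewrite the threshold hypothesis
  have e1 : (d1 : ℝ) - ((m : ℝ) + 1) + 2 = (d1 : ℝ) - m + 1 := by ring
  rw [e1] at hα2
  have hden : (0 : ℝ) < ((m : ℝ) + 1) * ((d1 : ℝ) - (m : ℝ) + 1) - 1 := by nlinarith
  have hα2' : α * (((m : ℝ) + 1) * ((d1 : ℝ) - m + 1) - 1) ≤ M * ((d1 : ℝ) - m + 1) :=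
    (le_div_iff₀ hden).mp hα2
  -- M - m·α ≥ 0
  have hMmα : (m : ℝ) * α ≤ M := by
    nlinarith [mul_nonneg hαpos.le (show (0 : ℝ) ≤ (d1 : ℝ) - m by linarith)]
  -- M - m·α ≤ α
  have hMα : M - (m : ℝ) * α ≤ α := by linarith
  -- candidate optimal β for d1
  set β0 : ℝ := (M - (m : ℝ) * α) / ((d1 : ℝ) - m) with hβ0def
  have hβ0nn : 0 ≤ β0 := div_nonneg (by linarith) hA.le
  have hAβ0 : ((d1 : ℝ) - m) * β0 = M - (m : ℝ) * α := by
    rw [hβ0def]; field_simp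
  have hx1β0 : α ≤ ((d1 : ℝ) - m + 1) * β0 := by
    rw [hβ0def, ← mul_div_assoc, le_div_iff₀ hA]
    nlinarith [hα2']
  have hhi0 : ∀ i < m, α ≤ ((d1 : ℝ) - i) * β0 := by
    intro i hi
    have hic : (i : ℝ) + 1 ≤ (m : ℝ) := by exact_mod_cast hi
    calc α ≤ ((d1 : ℝ) - m + 1) * β0 := hx1β0
      _ ≤ ((d1 : ℝ) - i) * β0 := by
          apply mul_le_mul_of_nonneg_right _ hβ0nn
          linarith
  have hβ0mem : β0 ∈ {β : ℝ | 0 ≤ β ∧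
      M ≤ ∑ i ∈ Finset.range (m + 1), min α (((d1 : ℝ) - i) * β)} := by
    refine ⟨hβ0nn, ?_⟩
    rw [sum_min_eval m d1 α β0 (by rw [hAβ0]; linarith) hhi0, hAβ0]
    linarith
  have hβ1le : β1 ≤ β0 := hlb hβ0mem
  -- lower bound on β1
  have hub := sum_min_ub m d1 α β1
  have hβ1lb : M - (m : ℝ) * α ≤ ((d1 : ℝ) - m) * β1 := by linarith
  have hAβ1 : ((d1 : ℝ) - m) * β1 = M - (m : ℝ) * α := by
    have h1 : ((d1 : ℝ) - m) * β1 ≤ ((d1 : ℝ) - m) * β0 :=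
      mul_le_mul_of_nonneg_left hβ1le hA.le
    rw [hAβ0] at h1
    linarith
  -- the scaled β for d2
  set γ : ℝ := ((d1 : ℝ) - m) / ((d2 : ℝ) - m) * β1 with hγdef
  have hγnn : 0 ≤ γ := mul_nonneg (div_nonneg hA.le hB.le) hβ1nn
  have hBγ : ((d2 : ℝ) - m) * γ = M - (m : ℝ) * α := by
    rw [hγdef]
    field_simp
    linarith [hAβ1]
  have hγeq : γ = (M - (m : ℝ) * α) / ((d2 : ℝ) - m) := by
    rw [eq_div_iff hB.ne']
    linarith [hBγ]
  -- threshold condition for d2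
  have key2 : α * (((m : ℝ) + 1) * ((d2 : ℝ) - m + 1) - 1) ≤ M * ((d2 : ℝ) - m + 1) := by
    have h : (0 : ℝ) ≤ (α * ((m : ℝ) + 1) - M) * ((d1 : ℝ) - (d2 : ℝ)) :=
      mul_nonneg (by linarith) (by linarith)
    have h1 : α * (((m : ℝ) + 1) * ((d2 : ℝ) - m + 1) - 1)
        = α * (((m : ℝ) + 1) * ((d1 : ℝ) - m + 1) - 1)
          - (α * ((m : ℝ) + 1) - M) * ((d1 : ℝ) - (d2 : ℝ))
          - M * ((d1 : ℝ) - (d2 : ℝ)) := by ring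
    have h2 : M * ((d2 : ℝ) - m + 1)
        = M * ((d1 : ℝ) - m + 1) - M * ((d1 : ℝ) - (d2 : ℝ)) := by ring
    rw [h1, h2]
    linarith [hα2']
  have hx2γ : α ≤ ((d2 : ℝ) - m + 1) * γ := by
    rw [hγeq, ← mul_div_assoc, le_div_iff₀ hB]
    nlinarith [key2]
  have hhi2 : ∀ i < m, α ≤ ((d2 : ℝ) - i) * γ := by
    intro i hi
    have hic : (i : ℝ) + 1 ≤ (m : ℝ) := by exact_mod_cast hi
    calc α ≤ ((d2 : ℝ) - m + 1) * γ := hx2γ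
      _ ≤ ((d2 : ℝ) - i) * γ := by
          apply mul_le_mul_of_nonneg_right _ hγnn
          linarith
  have hγe : ((d1 : ℝ) - ((m : ℝ) + 1) + 1) / ((d2 : ℝ) - ((m : ℝ) + 1) + 1) * β1 = γ := by
    rw [hγdef]; ring_nf
  rw [hγe, sum_min_eval m d2 α γ (by rw [hBγ]; linarith) hhi2, hBγ]
  ring
end
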